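/- arXiv:2005.13726 — 2 statements merged into one kernel-verified Lean document; each statement's English description precedes it below -/
import Mathlib

section
/- Let P ∈ ℤ[X] be monic and irreducible. Then M(P) = 1 if and only if P(X) = X or P is a cyclotomic polynomial. -/
/-- Mahler measure of a complex polynomial. -/
noncomputable def mahlerMeasure (P : Polynomial ℂ) : ℝ :=
  (P.roots.map (fun z => max 1 ‖z‖)).prod

private lemma one_le_prod_real (s : Multiset ℝ) (h : ∀ x ∈ s, 1 ≤ x) : 1 ≤ s.prod := by
  induction s using Multiset.induction with
  | empty => simp
  | cons a s ih =>
    simp only [Multiset.prod_cons]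
    have h1 := h a (Multiset.mem_cons_self a s)
    have h2 := ih fun x hx => h x (Multiset.mem_cons_of_mem hx)
    nlinarith

private lemma prod_le_one_real (s : Multiset ℝ) (h : ∀ x ∈ s, 0 ≤ x ∧ x ≤ 1) :
    s.prod ≤ 1 ∧ 0 ≤ s.prod := by
  induction s using Multiset.induction with
  | empty => simp
  | cons a s ih =>
    simp only [Multiset.prod_cons]
    have h1 := h a (Multiset.mem_cons_self a s)
    have h2 := ih fun x hx => h x (Multiset.mem_cons_of_mem hx)
    constructor <;> nlinarith [h1.1, h1.2, h2.1, h2.2]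

private lemma all_eq_one_of_prod_eq_one (s : Multiset ℝ) (h : ∀ x ∈ s, 1 ≤ x)
    (hp : s.prod = 1) : ∀ x ∈ s, x = 1 := by
  intro x hx
  have h1 : s.prod = x * (s.erase x).prod := by
    rw [← Multiset.prod_cons, Multiset.cons_erase hx]
  have h2 : 1 ≤ (s.erase x).prod :=
    one_le_prod_real _ fun y hy => h y (Multiset.mem_of_mem_erase hy)
  have h3 := h x hx
  nlinarith

private lemma all_eq_one_of_prod_eq_one' (s : Multiset ℝ) (h : ∀ x ∈ s, 0 ≤ x ∧ x ≤ 1)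
    (hp : s.prod = 1) : ∀ x ∈ s, x = 1 := by
  intro x hx
  have h1 : s.prod = x * (s.erase x).prod := by
    rw [← Multiset.prod_cons, Multiset.cons_erase hx]
  have h2 := prod_le_one_real (s.erase x) fun y hy => h y (Multiset.mem_of_mem_erase hy)
  have h3 := h x hx
  nlinarith [h2.1, h2.2, h3.1, h3.2]

/-- Kronecker's theorem: a monic irreducible integer polynomial has Mahler
measure 1 iff it is X or a cyclotomic polynomial. -/
theorem mahler_eq_one_iff (P : Polynomial ℤ) (hm : P.Monic) (hirr : Irreducible P) :
    mahlerMeasure (P.map (Int.castRingHom ℂ)) = 1 ↔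
      P = Polynomial.X ∨ ∃ n : ℕ, 0 < n ∧ P = Polynomial.cyclotomic n ℤ := by
  classical
  open IntermediateField in
  set Q : Polynomial ℂ := P.map (Int.castRingHom ℂ) with hQdef
  have hQm : Q.Monic := hm.map _
  have hQ0 : Q ≠ 0 := hQm.ne_zero
  constructor
  · intro h1
    -- every root of Q has absolute value ≤ 1
    have habs_le : ∀ z ∈ Q.roots, ‖z‖ ≤ 1 := by
      intro z hz
      have hall := all_eq_one_of_prod_eq_one (Q.roots.map fun z => max 1 ‖z‖)
        (by
          intro x hx
          obtain ⟨w, _, rfl⟩ := Multiset.mem_map.mp hx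
          exact le_max_left _ _) h1 (max 1 ‖z‖)
        (Multiset.mem_map_of_mem _ hz)
      calc ‖z‖ ≤ max 1 ‖z‖ := le_max_right _ _
        _ = 1 := hall
    by_cases hc0 : P.coeff 0 = 0
    · -- P is divisible by X, hence P = X
      left
      have hXdvd : Polynomial.X ∣ P := Polynomial.X_dvd_iff.mpr hc0
      obtain ⟨q, hq⟩ := hXdvd
      rcases hirr.isUnit_or_isUnit hq with hu | hu
      · exact absurd hu Polynomial.not_isUnit_X
      · obtain ⟨a, ha⟩ := Polynomial.isUnit_iff.mp hu
        have hlead : P.leadingCoeff = a := by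
          rw [hq, ← ha.2, Polynomial.leadingCoeff_mul, Polynomial.leadingCoeff_X,
            Polynomial.leadingCoeff_C, one_mul]
        have : a = 1 := by rw [← hlead]; exact hm
        rw [hq, ← ha.2, this, Polynomial.C_1, mul_one]
    · -- all roots have absolute value exactly 1
      have hdeg : 0 < P.natDegree := by
        rcases Nat.eq_zero_or_pos P.natDegree with h | h
        · exact absurd ((Polynomial.Monic.natDegree_eq_zero hm).mp h ▸ isUnit_one)
            hirr.not_isUnit
        · exact h
      have hsplits : Q.Splits := IsAlgClosed.splits Q
      -- product of |roots| equals |P(0)| ≥ 1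
      have hprod : ‖Q.roots.prod‖ = |(P.coeff 0 : ℤ)| := by
        have h := hsplits.coeff_zero_eq_prod_roots_of_monic hQm
        have hcoeff : Q.coeff 0 = (P.coeff 0 : ℂ) := by
          simp [hQdef, Polynomial.coeff_map]
        have h2 : ‖(-1 : ℂ) ^ Q.natDegree * Q.roots.prod‖
            = ‖Q.roots.prod‖ := by
          simp
        rw [← h2, ← h, hcoeff]
        exact_mod_cast Complex.norm_intCast _
      have habs_one : ∀ z ∈ Q.roots, ‖z‖ = 1 := by
        have hge : (1 : ℝ) ≤ (Q.roots.map (‖·‖)).prod := by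
          rw [show (Q.roots.map (‖·‖)).prod = ‖Q.roots.prod‖ from
            (map_multiset_prod (normHom (α := ℂ)) _).symm, hprod]
          have : 1 ≤ |(P.coeff 0 : ℤ)| := Int.one_le_abs hc0
          exact_mod_cast this
        have hle : (Q.roots.map (‖·‖)).prod ≤ 1 :=
          (prod_le_one_real _ (by
            intro x hx
            obtain ⟨w, hw, rfl⟩ := Multiset.mem_map.mp hx
            exact ⟨norm_nonneg w, habs_le w hw⟩)).1
        have heq : (Q.roots.map (‖·‖)).prod = 1 := le_antisymm hle hge
        intro z hz
        exact all_eq_one_of_prod_eq_one' _ (by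
          intro x hx
          obtain ⟨w, hw, rfl⟩ := Multiset.mem_map.mp hx
          exact ⟨norm_nonneg w, habs_le w hw⟩) heq _ (Multiset.mem_map_of_mem _ hz)
      -- pick a root α
      have hcard : 0 < Multiset.card Q.roots := by
        have := (Polynomial.Splits.natDegree_eq_card_roots (f := Q) hsplits)
        rw [← this]
        rwa [hm.natDegree_map]
      obtain ⟨α, hα⟩ := Multiset.card_pos_iff_exists_mem.mp hcard
      have hαQ : Polynomial.eval α Q = 0 := (Polynomial.mem_roots hQ0).mp hα
      have hαroot : Polynomial.aeval α P = 0 := by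
        rwa [Polynomial.aeval_def, ← Polynomial.eval_map]
      have hαint : IsIntegral ℤ α := ⟨P, hm, hαroot⟩
      have hαratint : IsIntegral ℚ α := hαint.tower_top
      -- minpoly ℚ α = P.map ℚ
      have hPQirr : Irreducible (P.map (Int.castRingHom ℚ)) :=
        (Polynomial.IsPrimitive.Int.irreducible_iff_irreducible_map_cast hm.isPrimitive).mp hirr
      have hmapmap : (P.map (Int.castRingHom ℚ)).map (algebraMap ℚ ℂ) = Q := by
        rw [hQdef, Polynomial.map_map]
        congr 1
      have haevalQ : Polynomial.aeval α (P.map (Int.castRingHom ℚ)) = 0 := by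
        rw [Polynomial.aeval_def, ← Polynomial.eval_map, hmapmap]
        exact hαQ
      have hminp : P.map (Int.castRingHom ℚ) = minpoly ℚ α :=
        minpoly.eq_of_irreducible_of_monic hPQirr haevalQ (hm.map _)
      -- set up the number field ℚ(α)
      haveI : FiniteDimensional ℚ ℚ⟮α⟯ := IntermediateField.adjoin.finiteDimensional hαratint
      haveI : NumberField ℚ⟮α⟯ := ⟨⟩
      set x : ℚ⟮α⟯ := IntermediateField.AdjoinSimple.gen ℚ α with hxdef
      have hxint : IsIntegral ℤ x := by
        refine (isIntegral_algebraMap_iff (algebraMap ℚ⟮α⟯ ℂ).injective).mp ?_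
        rwa [IntermediateField.AdjoinSimple.algebraMap_gen]
      have hnorm : ∀ φ : ℚ⟮α⟯ →+* ℂ, ‖φ x‖ = 1 := by
        intro φ
        have hmem : φ x ∈ (minpoly ℚ x).rootSet ℂ := by
          rw [← NumberField.Embeddings.range_eval_eq_rootSet_minpoly ℚ⟮α⟯ ℂ x]
          exact ⟨φ, rfl⟩
        rw [show minpoly ℚ x = minpoly ℚ α by
          convert IntermediateField.minpoly_gen ℚ α
          exacts [rfl, Subsingleton.elim _ _], ← hminp] at hmem
        have : φ x ∈ Q.roots := by
          rw [Polynomial.mem_rootSet] at hmem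
          rw [Polynomial.mem_roots hQ0]
          have h2 := hmem.2
          rw [Polynomial.aeval_def, ← Polynomial.eval_map, hmapmap] at h2
          exact h2
        have := habs_one _ this
        exact this
      obtain ⟨n, hn, hxn⟩ := NumberField.Embeddings.pow_eq_one_of_norm_eq_one ℚ⟮α⟯ ℂ hxint hnorm
      have hαn : α ^ n = 1 := by
        have : algebraMap ℚ⟮α⟯ ℂ (x ^ n) = algebraMap ℚ⟮α⟯ ℂ 1 := by rw [hxn]
        rwa [map_pow, map_one, IntermediateField.AdjoinSimple.algebraMap_gen] at this
      have hfin : IsOfFinOrder α := isOfFinOrder_iff_pow_eq_one.mpr ⟨n, hn, hαn⟩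
      have hord : 0 < orderOf α := hfin.orderOf_pos
      have hprim : IsPrimitiveRoot α (orderOf α) := IsPrimitiveRoot.orderOf α
      right
      refine ⟨orderOf α, hord, ?_⟩
      have hcyc : Polynomial.cyclotomic (orderOf α) ℚ = minpoly ℚ α :=
        Polynomial.cyclotomic_eq_minpoly_rat hprim hord
      have : P.map (Int.castRingHom ℚ) = (Polynomial.cyclotomic (orderOf α) ℤ).map
          (Int.castRingHom ℚ) := by
        rw [Polynomial.map_cyclotomic, hminp, ← hcyc]
      exact Polynomial.map_injective _ (Int.cast_injective) this
  · rintro (rfl | ⟨n, hn, rfl⟩)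
    · simp [mahlerMeasure, hQdef, Polynomial.roots_X]
    · have hQc : Q = Polynomial.cyclotomic n ℂ := by
        rw [hQdef, Polynomial.map_cyclotomic]
      rw [mahlerMeasure]
      apply Multiset.prod_eq_one
      intro r hr
      obtain ⟨z, hz, rfl⟩ := Multiset.mem_map.mp hr
      have hzroot : (Polynomial.cyclotomic n ℂ).IsRoot z := by
        rw [← hQc]; exact (Polynomial.mem_roots hQ0).mp hz
      have hzn : z ^ n = 1 := by
        have hdvd : Polynomial.cyclotomic n ℂ ∣ (Polynomial.X ^ n - 1) :=
          Polynomial.cyclotomic.dvd_X_pow_sub_one n ℂ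
        have := hzroot.dvd hdvd
        simpa [Polynomial.IsRoot, sub_eq_zero] using this
      have habs : ‖z‖ = 1 := by
        have h1 : ‖z‖ ^ n = 1 := by
          rw [← norm_pow, hzn, norm_one]
        rcases lt_trichotomy ‖z‖ 1 with h | h | h
        · have := pow_lt_one₀ (norm_nonneg z) h hn.ne'
          linarith
        · exact h
        · have := one_lt_pow₀ h hn.ne'
          linarith
      rw [habs, max_self]
end

section
/- If α is an algebraic integer all of whose conjugates in ℂ (including α itself) have absolute value 1, then α is a root of unity. -/
open IntermediateField in

/-- Kronecker's theorem: an algebraic integer all of whose conjugates in ℂ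
(including itself) have absolute value 1 is a root of unity. -/
theorem kronecker_root_of_unity (α : ℂ) (hα : IsIntegral ℤ α)
    (h : ∀ z ∈ ((minpoly ℚ α).map (algebraMap ℚ ℂ)).roots, ‖z‖ = 1) :
    ∃ n : ℕ, 0 < n ∧ α ^ n = 1 := by
  have halg : IsIntegral ℚ α := hα.tower_top
  let K := ℚ⟮α⟯
  have : FiniteDimensional ℚ K := IntermediateField.adjoin.finiteDimensional halg
  have : NumberField K := ⟨⟩
  let x : K := IntermediateField.AdjoinSimple.gen ℚ α
  have hx : algebraMap K ℂ x = α := rfl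
  have hxi : IsIntegral ℤ x := by
    rwa [← isIntegral_algebraMap_iff (algebraMap K ℂ).injective, hx]
  have hmin : minpoly ℚ x = minpoly ℚ α := by
    rw [← minpoly.algebraMap_eq (algebraMap K ℂ).injective, hx]
  have hnorm : ∀ φ : K →+* ℂ, ‖φ x‖ = 1 := by
    intro φ
    have hmem : φ x ∈ Set.range fun ψ : K →+* ℂ => ψ x := ⟨φ, rfl⟩
    rw [NumberField.Embeddings.range_eval_eq_rootSet_minpoly K ℂ x, hmin] at hmem
    rw [Polynomial.mem_rootSet] at hmem
    have := h (φ x) ?_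
    · simpa using this
    · rw [Polynomial.mem_roots (Polynomial.map_ne_zero (minpoly.ne_zero halg)),
        Polynomial.IsRoot.def, ← Polynomial.eval₂_eq_eval_map, ← Polynomial.aeval_def]
      exact hmem.2
  obtain ⟨n, hn, hxn⟩ := NumberField.Embeddings.pow_eq_one_of_norm_eq_one K ℂ hxi hnorm
  refine ⟨n, hn, ?_⟩
  rw [← hx, ← map_pow, hxn, map_one]
end
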